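/- arXiv:2206.09658 — 2 statements merged into one kernel-verified Lean document; each statement's English description precedes it below -/
import Mathlib

section
/- Let (C, E, s) be an n-exangulated category and F : C → A a half exact functor. For δ, δ' ∈ E(X_{n+1}, X₀): if δ, δ' ∈ E^F_R(X_{n+1}, X₀) then δ ⊕ δ' ∈ E^F_R(X_{n+1} ⊕ X_{n+1}, X₀ ⊕ X₀), and consequently δ' − δ ∈ E^F_R(X_{n+1}, X₀); moreover 0 ∈ E^F_R(X_{n+1}, X₀). Hence E^F_R(X_{n+1}, X₀) is a subgroup of E(X_{n+1}, X₀). -/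
open CategoryTheory CategoryTheory.Limits Opposite

universe v u v₂ u₂

/-- A candidate `n`-exangle: an `(n+2)`-term sequence of composable morphisms in `C`,
in degrees `0, 1, …, n+1`. -/
structure NExCplx (C : Type u) [Category.{v} C] (n : ℕ) where
  X : Fin (n + 2) → C
  d : ∀ i : Fin (n + 1), X i.castSucc ⟶ X i.succ

namespace NEx

variable {C : Type u} [Category.{v} C]

/-- The degree `0` index. -/
abbrev fin0 (n : ℕ) : Fin (n + 2) := ⟨0, by omega⟩

/-- The degree `n+1` index. -/
abbrev finLast (n : ℕ) : Fin (n + 2) := Fin.last (n + 1)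

/-- The group of `E`-extensions attached to a candidate `n`-exangle:
`E(X_{n+1}, X₀)`. -/
abbrev NEext (E : Cᵒᵖ ⥤ C ⥤ AddCommGrpCat.{v}) {n : ℕ} (Z : NExCplx C n) : Type v :=
  (E.obj (op (Z.X (finLast n)))).obj (Z.X (fin0 n))

/-- Pushforward `a_*δ` of an extension `δ ∈ E(X, A)` along `a : A ⟶ A'`. -/
def pushf (E : Cᵒᵖ ⥤ C ⥤ AddCommGrpCat.{v}) {A A' X : C} (a : A ⟶ A')
    (δ : (E.obj (op X)).obj A) : (E.obj (op X)).obj A' :=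
  ((E.obj (op X)).map a) δ

/-- Pullback `c^*δ` of an extension `δ ∈ E(X, A)` along `c : X' ⟶ X`. -/
def pullb (E : Cᵒᵖ ⥤ C ⥤ AddCommGrpCat.{v}) {A X X' : C} (c : X' ⟶ X)
    (δ : (E.obj (op X)).obj A) : (E.obj (op X')).obj A :=
  ((E.map c.op).app A) δ

/-- Transport of an extension along equalities of its end objects. -/
def extCast (E : Cᵒᵖ ⥤ C ⥤ AddCommGrpCat.{v}) {A A' X X' : C} (hA : A = A') (hX : X = X')
    (δ : (E.obj (op X)).obj A) : (E.obj (op X')).obj A' :=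
  pullb E (eqToHom hX.symm) (pushf E (eqToHom hA) δ)

/-- A morphism of (candidate) `n`-exangles `⟨Z, δ⟩ → ⟨W, ρ⟩`. -/
structure ExangleMor (E : Cᵒᵖ ⥤ C ⥤ AddCommGrpCat.{v}) {n : ℕ} (Z W : NExCplx C n)
    (δ : NEext E Z) (ρ : NEext E W) where
  app : ∀ i : Fin (n + 2), Z.X i ⟶ W.X i
  comm : ∀ i : Fin (n + 1), Z.d i ≫ app i.succ = app i.castSucc ≫ W.d i
  compat : pushf E (app (fin0 n)) δ = pullb E (app (finLast n)) ρ


variable [Preadditive C] [HasBinaryBiproducts C]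

/-- Objects of the total complex (mapping cone) of a ladder with rows `A`, `B`. -/
noncomputable def coneX (n : ℕ) (A B : Fin (n + 1) → C) (i : Fin (n + 2)) : C :=
  if _ : i.val = 0 then A ⟨0, Nat.succ_pos n⟩
  else if _ : i.val ≤ n then A ⟨i.val, by omega⟩ ⊞ B ⟨i.val - 1, by omega⟩
  else B ⟨n, Nat.lt_succ_self n⟩

lemma coneX_zero (n : ℕ) (A B : Fin (n + 1) → C) :
    coneX n A B (fin0 n) = A ⟨0, Nat.succ_pos n⟩ := by
  simp [coneX, fin0]

lemma coneX_mid (n : ℕ) (A B : Fin (n + 1) → C) (i : Fin (n + 2))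
    (h0 : i.val ≠ 0) (h1 : i.val ≤ n) :
    coneX n A B i = (A ⟨i.val, by omega⟩ ⊞ B ⟨i.val - 1, by omega⟩) := by
  rw [coneX, dif_neg h0, dif_pos h1]

lemma coneX_last (n : ℕ) (A B : Fin (n + 1) → C) :
    coneX n A B (finLast n) = B ⟨n, Nat.lt_succ_self n⟩ := by
  rw [coneX, dif_neg (by simp [finLast]), dif_neg (by simp [finLast])]

/-- Differentials of the mapping cone of a ladder:
`d₀ = (-f₀, φ₀)ᵀ`, `dᵢ = [-fᵢ, 0; φᵢ, g_{i-1}]`, `dₙ = (φₙ, g_{n-1})`. -/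
noncomputable def coneD (n : ℕ) (A B : Fin (n + 1) → C)
    (f : ∀ i : Fin n, A i.castSucc ⟶ A i.succ)
    (g : ∀ i : Fin n, B i.castSucc ⟶ B i.succ)
    (φ : ∀ i : Fin (n + 1), A i ⟶ B i)
    (i : Fin (n + 1)) : coneX n A B i.castSucc ⟶ coneX n A B i.succ :=
  if h0 : i.val = 0 then
    if hn : n = 0 then
      eqToHom (show coneX n A B i.castSucc = A ⟨0, Nat.succ_pos n⟩ by
          simp [coneX, h0]) ≫
        φ ⟨0, Nat.succ_pos n⟩ ≫
        eqToHom (show B ⟨0, Nat.succ_pos n⟩ = coneX n A B i.succ by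
          subst hn
          rw [coneX, dif_neg (by simp only [Fin.val_succ]; omega),
            dif_neg (by simp only [Fin.val_succ]; omega)])
    else
      eqToHom (show coneX n A B i.castSucc = A ⟨i.val, i.isLt⟩ by
          rw [coneX, dif_pos (show (i.castSucc).val = 0 from h0)]
          exact congrArg A (Fin.ext h0.symm)) ≫
        biprod.lift (-(f ⟨i.val, by omega⟩)) (φ ⟨i.val, i.isLt⟩) ≫
        eqToHom (show (A ⟨i.val + 1, by omega⟩ ⊞ B ⟨i.val + 1 - 1, by omega⟩ : C)
            = coneX n A B i.succ by
          rw [coneX, dif_neg (by simp only [Fin.val_succ]; omega),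
            dif_pos (by simp only [Fin.val_succ]; omega)]
          rfl)
  else if hv : i.val < n then
    eqToHom (show coneX n A B i.castSucc
          = (A ⟨i.val, i.isLt⟩ ⊞ B ⟨i.val - 1, by omega⟩) by
        rw [coneX, dif_neg (show ¬(i.castSucc).val = 0 from h0),
          dif_pos (show (i.castSucc).val ≤ n by simp only [Fin.coe_castSucc]; omega)]
        rfl) ≫
      biprod.lift (biprod.desc (-(f ⟨i.val, hv⟩)) 0)
        (biprod.desc (φ ⟨i.val, i.isLt⟩)
          (g ⟨i.val - 1, by omega⟩ ≫
            eqToHom (congrArg B (Fin.ext (show i.val - 1 + 1 = i.val by omega))))) ≫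
      eqToHom (show (A ⟨i.val + 1, by omega⟩ ⊞ B ⟨i.val + 1 - 1, by omega⟩ : C)
          = coneX n A B i.succ by
        rw [coneX, dif_neg (by simp only [Fin.val_succ]; omega),
          dif_pos (by simp only [Fin.val_succ]; omega)]
        rfl)
  else
    eqToHom (show coneX n A B i.castSucc
          = (A ⟨i.val, i.isLt⟩ ⊞ B ⟨i.val - 1, by have := i.isLt; omega⟩) by
        rw [coneX, dif_neg (show ¬(i.castSucc).val = 0 from h0),
          dif_pos (show (i.castSucc).val ≤ n by
            simp only [Fin.coe_castSucc]; have := i.isLt; omega)]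
        rfl) ≫
      biprod.desc (φ ⟨i.val, i.isLt⟩)
        (g ⟨i.val - 1, by have := i.isLt; omega⟩ ≫
          eqToHom (congrArg B (Fin.ext (show i.val - 1 + 1 = i.val by omega)))) ≫
      eqToHom (show B ⟨i.val, i.isLt⟩ = coneX n A B i.succ by
        rw [coneX, dif_neg (by simp only [Fin.val_succ]; omega),
          dif_neg (by simp only [Fin.val_succ]; have := i.isLt; omega)]
        exact congrArg B (Fin.ext (show (i.val : ℕ) = n by have := i.isLt; omega)))

/-- The mapping cone (total complex) of a ladder, as a candidate `n`-exangle. -/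
noncomputable def coneCplx (n : ℕ) (A B : Fin (n + 1) → C)
    (f : ∀ i : Fin n, A i.castSucc ⟶ A i.succ)
    (g : ∀ i : Fin n, B i.castSucc ⟶ B i.succ)
    (φ : ∀ i : Fin (n + 1), A i ⟶ B i) : NExCplx C n :=
  ⟨coneX n A B, coneD n A B f g φ⟩


/-- Objects of the total complex (mapping cocone) of a ladder with rows `A`, `B`. -/
noncomputable def coconeX (n : ℕ) (A B : Fin (n + 1) → C) (i : Fin (n + 2)) : C :=
  if _ : i.val = 0 then A ⟨0, Nat.succ_pos n⟩
  else if _ : i.val ≤ n then B ⟨i.val - 1, by omega⟩ ⊞ A ⟨i.val, by omega⟩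
  else B ⟨n, Nat.lt_succ_self n⟩

/-- Differentials of the mapping cocone of a ladder:
`d₀ = (φ₀, -f₀)ᵀ`, `dᵢ = [g_{i-1}, φᵢ; 0, -fᵢ]`, `dₙ = (g_{n-1}, φₙ)`. -/
noncomputable def coconeD (n : ℕ) (A B : Fin (n + 1) → C)
    (f : ∀ i : Fin n, A i.castSucc ⟶ A i.succ)
    (g : ∀ i : Fin n, B i.castSucc ⟶ B i.succ)
    (φ : ∀ i : Fin (n + 1), A i ⟶ B i)
    (i : Fin (n + 1)) : coconeX n A B i.castSucc ⟶ coconeX n A B i.succ :=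
  if h0 : i.val = 0 then
    if hn : n = 0 then
      eqToHom (show coconeX n A B i.castSucc = A ⟨0, Nat.succ_pos n⟩ by
          simp [coconeX, h0]) ≫
        φ ⟨0, Nat.succ_pos n⟩ ≫
        eqToHom (show B ⟨0, Nat.succ_pos n⟩ = coconeX n A B i.succ by
          subst hn
          rw [coconeX, dif_neg (by simp only [Fin.val_succ]; omega),
            dif_neg (by simp only [Fin.val_succ]; omega)])
    else
      eqToHom (show coconeX n A B i.castSucc = A ⟨i.val, i.isLt⟩ by
          rw [coconeX, dif_pos (show (i.castSucc).val = 0 from h0)]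
          exact congrArg A (Fin.ext h0.symm)) ≫
        biprod.lift (φ ⟨i.val, i.isLt⟩) (-(f ⟨i.val, by omega⟩)) ≫
        eqToHom (show (B ⟨i.val + 1 - 1, by omega⟩ ⊞ A ⟨i.val + 1, by omega⟩ : C)
            = coconeX n A B i.succ by
          rw [coconeX, dif_neg (by simp only [Fin.val_succ]; omega),
            dif_pos (by simp only [Fin.val_succ]; omega)]
          rfl)
  else if hv : i.val < n then
    eqToHom (show coconeX n A B i.castSucc
          = (B ⟨i.val - 1, by omega⟩ ⊞ A ⟨i.val, i.isLt⟩) by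
        rw [coconeX, dif_neg (show ¬(i.castSucc).val = 0 from h0),
          dif_pos (show (i.castSucc).val ≤ n by simp only [Fin.coe_castSucc]; omega)]
        rfl) ≫
      biprod.lift
        (biprod.desc (g ⟨i.val - 1, by omega⟩ ≫
            eqToHom (congrArg B (Fin.ext (show i.val - 1 + 1 = i.val by omega))))
          (φ ⟨i.val, i.isLt⟩))
        (biprod.desc 0 (-(f ⟨i.val, hv⟩))) ≫
      eqToHom (show (B ⟨i.val + 1 - 1, by omega⟩ ⊞ A ⟨i.val + 1, by omega⟩ : C)
          = coconeX n A B i.succ by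
        rw [coconeX, dif_neg (by simp only [Fin.val_succ]; omega),
          dif_pos (by simp only [Fin.val_succ]; omega)]
        rfl)
  else
    eqToHom (show coconeX n A B i.castSucc
          = (B ⟨i.val - 1, by have := i.isLt; omega⟩ ⊞ A ⟨i.val, i.isLt⟩) by
        rw [coconeX, dif_neg (show ¬(i.castSucc).val = 0 from h0),
          dif_pos (show (i.castSucc).val ≤ n by
            simp only [Fin.coe_castSucc]; have := i.isLt; omega)]
        rfl) ≫
      biprod.desc
        (g ⟨i.val - 1, by have := i.isLt; omega⟩ ≫
          eqToHom (congrArg B (Fin.ext (show i.val - 1 + 1 = i.val by omega))))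
        (φ ⟨i.val, i.isLt⟩) ≫
      eqToHom (show B ⟨i.val, i.isLt⟩ = coconeX n A B i.succ by
        rw [coconeX, dif_neg (by simp only [Fin.val_succ]; omega),
          dif_neg (by simp only [Fin.val_succ]; have := i.isLt; omega)]
        exact congrArg B (Fin.ext (show (i.val : ℕ) = n by have := i.isLt; omega)))

noncomputable def coconeCplx (n : ℕ) (A B : Fin (n + 1) → C)
    (f : ∀ i : Fin n, A i.castSucc ⟶ A i.succ)
    (g : ∀ i : Fin n, B i.castSucc ⟶ B i.succ)
    (φ : ∀ i : Fin (n + 1), A i ⟶ B i) : NExCplx C n :=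
  ⟨coconeX n A B, coconeD n A B f g φ⟩


/-- Differentials of the total complex in the second sign convention:
`d₀ = (-f₀, φ₀)ᵀ`, `dᵢ = [fᵢ, 0; (-1)^{i+1}φᵢ, g_{i-1}]`,
`dₙ = ((-1)^{n+1}φₙ, g_{n-1})`. -/
noncomputable def coneD' (n : ℕ) (A B : Fin (n + 1) → C)
    (f : ∀ i : Fin n, A i.castSucc ⟶ A i.succ)
    (g : ∀ i : Fin n, B i.castSucc ⟶ B i.succ)
    (φ : ∀ i : Fin (n + 1), A i ⟶ B i)
    (i : Fin (n + 1)) : coneX n A B i.castSucc ⟶ coneX n A B i.succ :=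
  if h0 : i.val = 0 then
    if hn : n = 0 then
      eqToHom (show coneX n A B i.castSucc = A ⟨0, Nat.succ_pos n⟩ by
          simp [coneX, h0]) ≫
        φ ⟨0, Nat.succ_pos n⟩ ≫
        eqToHom (show B ⟨0, Nat.succ_pos n⟩ = coneX n A B i.succ by
          subst hn
          rw [coneX, dif_neg (by simp only [Fin.val_succ]; omega),
            dif_neg (by simp only [Fin.val_succ]; omega)])
    else
      eqToHom (show coneX n A B i.castSucc = A ⟨i.val, i.isLt⟩ by
          rw [coneX, dif_pos (show (i.castSucc).val = 0 from h0)]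
          exact congrArg A (Fin.ext h0.symm)) ≫
        biprod.lift (-(f ⟨i.val, by omega⟩)) (φ ⟨i.val, i.isLt⟩) ≫
        eqToHom (show (A ⟨i.val + 1, by omega⟩ ⊞ B ⟨i.val + 1 - 1, by omega⟩ : C)
            = coneX n A B i.succ by
          rw [coneX, dif_neg (by simp only [Fin.val_succ]; omega),
            dif_pos (by simp only [Fin.val_succ]; omega)]
          rfl)
  else if hv : i.val < n then
    eqToHom (show coneX n A B i.castSucc
          = (A ⟨i.val, i.isLt⟩ ⊞ B ⟨i.val - 1, by omega⟩) by
        rw [coneX, dif_neg (show ¬(i.castSucc).val = 0 from h0),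
          dif_pos (show (i.castSucc).val ≤ n by simp only [Fin.coe_castSucc]; omega)]
        rfl) ≫
      biprod.lift (biprod.desc (f ⟨i.val, hv⟩) 0)
        (biprod.desc (((-1 : ℤ) ^ (i.val + 1)) • φ ⟨i.val, i.isLt⟩)
          (g ⟨i.val - 1, by omega⟩ ≫
            eqToHom (congrArg B (Fin.ext (show i.val - 1 + 1 = i.val by omega))))) ≫
      eqToHom (show (A ⟨i.val + 1, by omega⟩ ⊞ B ⟨i.val + 1 - 1, by omega⟩ : C)
          = coneX n A B i.succ by
        rw [coneX, dif_neg (by simp only [Fin.val_succ]; omega),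
          dif_pos (by simp only [Fin.val_succ]; omega)]
        rfl)
  else
    eqToHom (show coneX n A B i.castSucc
          = (A ⟨i.val, i.isLt⟩ ⊞ B ⟨i.val - 1, by have := i.isLt; omega⟩) by
        rw [coneX, dif_neg (show ¬(i.castSucc).val = 0 from h0),
          dif_pos (show (i.castSucc).val ≤ n by
            simp only [Fin.coe_castSucc]; have := i.isLt; omega)]
        rfl) ≫
      biprod.desc (((-1 : ℤ) ^ (i.val + 1)) • φ ⟨i.val, i.isLt⟩)
        (g ⟨i.val - 1, by have := i.isLt; omega⟩ ≫
          eqToHom (congrArg B (Fin.ext (show i.val - 1 + 1 = i.val by omega)))) ≫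
      eqToHom (show B ⟨i.val, i.isLt⟩ = coneX n A B i.succ by
        rw [coneX, dif_neg (by simp only [Fin.val_succ]; omega),
          dif_neg (by simp only [Fin.val_succ]; have := i.isLt; omega)]
        exact congrArg B (Fin.ext (show (i.val : ℕ) = n by have := i.isLt; omega)))



lemma coconeX_zero (n : ℕ) (A B : Fin (n + 1) → C) :
    coconeX n A B (fin0 n) = A ⟨0, Nat.succ_pos n⟩ := by
  simp [coconeX, fin0]

lemma coconeX_last (n : ℕ) (A B : Fin (n + 1) → C) :
    coconeX n A B (finLast n) = B ⟨n, Nat.lt_succ_self n⟩ := by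
  rw [coconeX, dif_neg (by simp [finLast]), dif_neg (by simp [finLast])]

variable [HasZeroObject C]

/-- A ladder (with rows `A`, `B`, horizontal maps `f`, `g` and vertical maps `φ`)
is a homotopy cartesian diagram with differential `dl` if its total complex
(mapping cone) together with `dl` is a distinguished `n`-exangle. -/
noncomputable def IsHomotopyCartesian (n : ℕ) (E : Cᵒᵖ ⥤ C ⥤ AddCommGrpCat.{v})
    (dist : ∀ Z : NExCplx C n, NEext E Z → Prop)
    (A B : Fin (n + 1) → C)
    (f : ∀ i : Fin n, A i.castSucc ⟶ A i.succ)
    (g : ∀ i : Fin n, B i.castSucc ⟶ B i.succ)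
    (φ : ∀ i : Fin (n + 1), A i ⟶ B i)
    (dl : (E.obj (op (B ⟨n, Nat.lt_succ_self n⟩))).obj (A ⟨0, Nat.succ_pos n⟩)) : Prop :=
  dist (coneCplx n A B f g φ)
    (extCast E (coneX_zero n A B).symm (coneX_last n A B).symm dl)

/-- The dual notion, using the mapping cocone. -/
noncomputable def IsCoHomotopyCartesian (n : ℕ) (E : Cᵒᵖ ⥤ C ⥤ AddCommGrpCat.{v})
    (dist : ∀ Z : NExCplx C n, NEext E Z → Prop)
    (A B : Fin (n + 1) → C)
    (f : ∀ i : Fin n, A i.castSucc ⟶ A i.succ)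
    (g : ∀ i : Fin n, B i.castSucc ⟶ B i.succ)
    (φ : ∀ i : Fin (n + 1), A i ⟶ B i)
    (dl : (E.obj (op (B ⟨n, Nat.lt_succ_self n⟩))).obj (A ⟨0, Nat.succ_pos n⟩)) : Prop :=
  dist (coconeCplx n A B f g φ)
    (extCast E (coconeX_zero n A B).symm (coconeX_last n A B).symm dl)

/-- `fm` is an inflation: it occurs as the `0`-th differential of some distinguished
`n`-exangle. -/
def IsInflationFor (n : ℕ) (E : Cᵒᵖ ⥤ C ⥤ AddCommGrpCat.{v})
    (dist : ∀ Z : NExCplx C n, NEext E Z → Prop) {X Y : C} (fm : X ⟶ Y) : Prop :=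
  ∃ (Z : NExCplx C n) (δ : NEext E Z), dist Z δ ∧
    ∃ (h1 : Z.X (fin0 n) = X) (h2 : Z.X (Fin.succ ⟨0, Nat.succ_pos n⟩) = Y),
      Z.d ⟨0, Nat.succ_pos n⟩ = eqToHom h1 ≫ fm ≫ eqToHom h2.symm

/-- `gm` is a deflation: it occurs as the `n`-th differential of some distinguished
`n`-exangle. -/
def IsDeflationFor (n : ℕ) (E : Cᵒᵖ ⥤ C ⥤ AddCommGrpCat.{v})
    (dist : ∀ Z : NExCplx C n, NEext E Z → Prop) {X Y : C} (gm : X ⟶ Y) : Prop :=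
  ∃ (Z : NExCplx C n) (δ : NEext E Z), dist Z δ ∧
    ∃ (h1 : Z.X (Fin.castSucc (Fin.last n)) = X) (h2 : Z.X (finLast n) = Y),
      Z.d (Fin.last n) = eqToHom h1 ≫ gm ≫ eqToHom h2.symm

/-- A pre-`n`-exangulated category structure on the additive category `C`:
an additive bifunctor `E : Cᵒᵖ × C → Ab` together with an exact realization,
recorded by the predicate `Distinguished` singling out the distinguished
`n`-exangles, subject to exactness of the associated Hom-sequences (R1),
existence of realizations, lifting of morphisms of extensions (R0), and
closure of inflations and deflations under composition (EA1). -/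
structure PreNExangulated (C : Type u) [Category.{v} C] [Preadditive C]
    [HasZeroObject C] [HasBinaryBiproducts C] (n : ℕ) where
  E : Cᵒᵖ ⥤ C ⥤ AddCommGrpCat.{v}
  Distinguished : ∀ Z : NExCplx C n, NEext E Z → Prop
  exact_contra_mid : ∀ ⦃Z : NExCplx C n⦄ ⦃δ : NEext E Z⦄, Distinguished Z δ →
    ∀ (W : C) (i : Fin n),
      Function.Exact (fun h : W ⟶ Z.X i.castSucc.castSucc => h ≫ Z.d i.castSucc)
        (fun h : W ⟶ Z.X i.succ.castSucc => h ≫ Z.d i.succ)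
  exact_contra_last : ∀ ⦃Z : NExCplx C n⦄ ⦃δ : NEext E Z⦄, Distinguished Z δ →
    ∀ (W : C),
      Function.Exact (fun h : W ⟶ Z.X (Fin.castSucc (Fin.last n)) => h ≫ Z.d (Fin.last n))
        (fun h : W ⟶ Z.X (finLast n) => pullb E h δ)
  exact_cov_mid : ∀ ⦃Z : NExCplx C n⦄ ⦃δ : NEext E Z⦄, Distinguished Z δ →
    ∀ (W : C) (i : Fin n),
      Function.Exact (fun h : Z.X i.succ.succ ⟶ W => Z.d i.succ ≫ h)
        (fun h : Z.X i.castSucc.succ ⟶ W => Z.d i.castSucc ≫ h)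
  exact_cov_first : ∀ ⦃Z : NExCplx C n⦄ ⦃δ : NEext E Z⦄, Distinguished Z δ →
    ∀ (W : C),
      Function.Exact (fun h : Z.X (Fin.succ ⟨0, Nat.succ_pos n⟩) ⟶ W => Z.d ⟨0, Nat.succ_pos n⟩ ≫ h)
        (fun h : Z.X (fin0 n) ⟶ W => pushf E h δ)
  lift_exists : ∀ ⦃Z W : NExCplx C n⦄ ⦃δ : NEext E Z⦄ ⦃ρ : NEext E W⦄,
    Distinguished Z δ → Distinguished W ρ →
    ∀ (a : Z.X (fin0 n) ⟶ W.X (fin0 n)) (c : Z.X (finLast n) ⟶ W.X (finLast n)),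
      pushf E a δ = pullb E c ρ →
      ∃ φ : ExangleMor E Z W δ ρ, φ.app (fin0 n) = a ∧ φ.app (finLast n) = c
  realize : ∀ (A Xl : C) (δ : (E.obj (op Xl)).obj A),
    ∃ (Z : NExCplx C n) (h0 : Z.X (fin0 n) = A) (hl : Z.X (finLast n) = Xl),
      Distinguished Z (extCast E h0.symm hl.symm δ)
  infl_comp : ∀ {X Y W : C} (f : X ⟶ Y) (g : Y ⟶ W),
    IsInflationFor n E Distinguished f → IsInflationFor n E Distinguished g →
      IsInflationFor n E Distinguished (f ≫ g)
  defl_comp : ∀ {X Y W : C} (f : X ⟶ Y) (g : Y ⟶ W),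
    IsDeflationFor n E Distinguished f → IsDeflationFor n E Distinguished g →
      IsDeflationFor n E Distinguished (f ≫ g)

/-- The axiom (EA2): a morphism of extensions of the form `(id, c)` between
distinguished `n`-exangles admits a good lift, i.e. one whose mapping cone
together with `(d₀^X)_*ρ` is again a distinguished `n`-exangle. -/
noncomputable def EA2For (n : ℕ) (E : Cᵒᵖ ⥤ C ⥤ AddCommGrpCat.{v})
    (dist : ∀ Z : NExCplx C n, NEext E Z → Prop) : Prop :=
  ∀ (Z W : NExCplx C n) (δ : NEext E Z) (ρ : NEext E W),
    dist Z δ → dist W ρ →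
    ∀ (h0 : Z.X (fin0 n) = W.X (fin0 n)) (c : Z.X (finLast n) ⟶ W.X (finLast n)),
      pushf E (eqToHom h0) δ = pullb E c ρ →
      ∃ φ : ExangleMor E Z W δ ρ,
        φ.app (fin0 n) = eqToHom h0 ∧ φ.app (finLast n) = c ∧
        IsHomotopyCartesian n E dist (fun i => Z.X i.succ) (fun i => W.X i.succ)
          (fun i => Z.d i.succ) (fun i => W.d i.succ) (fun i => φ.app i.succ)
          (pushf E (eqToHom h0.symm ≫ Z.d ⟨0, Nat.succ_pos n⟩) ρ)

/-- The condition (EA2-1): given two distinguished `n`-exangles starting at the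
same object and a morphism `φ₁` compatible with the first differentials, it
extends to a morphism of `n`-exangles `(id, φ₁, φ₂, …, φ_{n+1})` whose induced
ladder (in degrees `1, …, n+1`) is homotopy cartesian with differential
`(f₀)_*δ'`. -/
noncomputable def EA21For (n : ℕ) (E : Cᵒᵖ ⥤ C ⥤ AddCommGrpCat.{v})
    (dist : ∀ Z : NExCplx C n, NEext E Z → Prop) : Prop :=
  ∀ (Z W : NExCplx C n) (δ : NEext E Z) (δ' : NEext E W),
    dist Z δ → dist W δ' →
    ∀ (h0 : Z.X (fin0 n) = W.X (fin0 n))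
      (φ1 : Z.X (Fin.succ ⟨0, Nat.succ_pos n⟩) ⟶ W.X (Fin.succ ⟨0, Nat.succ_pos n⟩)),
      Z.d ⟨0, Nat.succ_pos n⟩ ≫ φ1 = eqToHom h0 ≫ W.d ⟨0, Nat.succ_pos n⟩ →
      ∃ φ : ExangleMor E Z W δ δ',
        φ.app (fin0 n) = eqToHom h0 ∧ φ.app (Fin.succ ⟨0, Nat.succ_pos n⟩) = φ1 ∧
        IsHomotopyCartesian n E dist (fun i => Z.X i.succ) (fun i => W.X i.succ)
          (fun i => Z.d i.succ) (fun i => W.d i.succ) (fun i => φ.app i.succ)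
          (pushf E (eqToHom h0.symm ≫ Z.d ⟨0, Nat.succ_pos n⟩) δ')

/-- The axiom (EA2)ᵒᵖ, dual to (EA2), via mapping cocones. -/
noncomputable def EA2opFor (n : ℕ) (E : Cᵒᵖ ⥤ C ⥤ AddCommGrpCat.{v})
    (dist : ∀ Z : NExCplx C n, NEext E Z → Prop) : Prop :=
  ∀ (W Z : NExCplx C n) (ρ : NEext E W) (δ : NEext E Z),
    dist W ρ → dist Z δ →
    ∀ (hl : W.X (finLast n) = Z.X (finLast n)) (a : W.X (fin0 n) ⟶ Z.X (fin0 n)),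
      pushf E a ρ = pullb E (eqToHom hl) δ →
      ∃ φ : ExangleMor E W Z ρ δ,
        φ.app (fin0 n) = a ∧ φ.app (finLast n) = eqToHom hl ∧
        IsCoHomotopyCartesian n E dist (fun i => W.X i.castSucc) (fun i => Z.X i.castSucc)
          (fun i => W.d i.castSucc) (fun i => Z.d i.castSucc) (fun i => φ.app i.castSucc)
          (pullb E (Z.d (Fin.last n) ≫ eqToHom hl.symm) ρ)

/-- An `n`-exangulated category: a pre-`n`-exangulated category satisfying
(EA2) and (EA2)ᵒᵖ. -/
structure NExangulated (C : Type u) [Category.{v} C] [Preadditive C]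
    [HasZeroObject C] [HasBinaryBiproducts C] (n : ℕ)
    extends PreNExangulated C n where
  ea2 : EA2For n E Distinguished
  ea2op : EA2opFor n E Distinguished

section HalfExact

variable {A : Type u₂} [Category.{v₂} A] [Abelian A]

/-- A functor `F : C → 𝒜` to an abelian category is half exact if it sends every
distinguished `n`-exangle `X₀ → ⋯ → X_{n+1}` to an exact sequence
`FX₀ → ⋯ → FX_{n+1}`. -/
def IsHalfExact {n : ℕ} (N : NExangulated C n) (F : C ⥤ A) : Prop :=
  ∀ ⦃Z : NExCplx C n⦄ ⦃δ : NEext N.E Z⦄, N.Distinguished Z δ → ∀ i : Fin n,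
    ∃ w : F.map (Z.d i.castSucc) ≫ F.map (Z.d i.succ) = 0,
      (ShortComplex.mk (F.map (Z.d i.castSucc)) (F.map (Z.d i.succ)) w).Exact

/-- The subset `E^F_R(X_{n+1}, X₀) ⊆ E(X_{n+1}, X₀)` of extensions all of whose
realizing distinguished `n`-exangles have `F`-epimorphic last differential. -/
def EFR {n : ℕ} (N : NExangulated C n) (F : C ⥤ A) (Xl X0 : C) :
    Set ((N.E.obj (op Xl)).obj X0) :=
  {δ | ∀ (Z : NExCplx C n) (h0 : Z.X (fin0 n) = X0) (hl : Z.X (finLast n) = Xl),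
      N.Distinguished Z (extCast N.E h0.symm hl.symm δ) →
        Epi (F.map (Z.d (Fin.last n)))}

end HalfExact

/-- `gm` is a deflation for the relative structure determined by the subfunctor `S`:
it is the last differential of a distinguished `n`-exangle whose extension lies
in `S`. -/
def IsRelDeflation (n : ℕ) (E : Cᵒᵖ ⥤ C ⥤ AddCommGrpCat.{v})
    (dist : ∀ Z : NExCplx C n, NEext E Z → Prop)
    (S : ∀ Xl X0 : C, Set ((E.obj (op Xl)).obj X0)) {X Y : C} (gm : X ⟶ Y) : Prop :=
  ∃ (Z : NExCplx C n) (δ : NEext E Z), dist Z δ ∧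
    δ ∈ S (Z.X (finLast n)) (Z.X (fin0 n)) ∧
    ∃ (h1 : Z.X (Fin.castSucc (Fin.last n)) = X) (h2 : Z.X (finLast n) = Y),
      Z.d (Fin.last n) = eqToHom h1 ≫ gm ≫ eqToHom h2.symm


/-! ### Auxiliary lemmas for `EFR_subgroup` -/

section EFRSubgroupAux
set_option linter.unusedSectionVars false

variable {E : Cᵒᵖ ⥤ C ⥤ AddCommGrpCat.{v}}

lemma pushf_pushf {X A A' A'' : C} (a : A ⟶ A') (b : A' ⟶ A'') (δ : (E.obj (op X)).obj A) :
    pushf E b (pushf E a δ) = pushf E (a ≫ b) δ := by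
  rw [pushf, pushf, pushf, (E.obj (op X)).map_comp]; rfl

lemma pullb_pullb {A X X' X'' : C} (c : X' ⟶ X) (c' : X'' ⟶ X') (δ : (E.obj (op X)).obj A) :
    pullb E c' (pullb E c δ) = pullb E (c' ≫ c) δ := by
  rw [pullb, pullb, pullb, op_comp, E.map_comp]; rfl

lemma pullb_pushf {A A' X X' : C} (a : A ⟶ A') (c : X' ⟶ X) (δ : (E.obj (op X)).obj A) :
    pullb E c (pushf E a δ) = pushf E a (pullb E c δ) :=
  congrArg (fun (k : (E.obj (op X)).obj A ⟶ (E.obj (op X')).obj A') => k δ)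
    ((E.map c.op).naturality a)

lemma pushf_id {X A : C} (δ : (E.obj (op X)).obj A) : pushf E (𝟙 A) δ = δ := by
  rw [pushf, (E.obj (op X)).map_id]; rfl

lemma pullb_id {X A : C} (δ : (E.obj (op X)).obj A) : pullb E (𝟙 X) δ = δ := by
  rw [pullb, show (𝟙 X).op = 𝟙 (op X) from rfl, E.map_id]; rfl

lemma pushf_add {X A A' : C} (a : A ⟶ A') (x y : (E.obj (op X)).obj A) :
    pushf E a (x + y) = pushf E a x + pushf E a y :=
  AddMonoidHom.map_add _ x y

lemma pushf_zero {X A A' : C} (a : A ⟶ A') :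
    pushf E a (0 : (E.obj (op X)).obj A) = 0 :=
  AddMonoidHom.map_zero _

lemma pullb_add {A X X' : C} (c : X' ⟶ X) (x y : (E.obj (op X)).obj A) :
    pullb E c (x + y) = pullb E c x + pullb E c y :=
  AddMonoidHom.map_add _ x y

lemma pullb_sub {A X X' : C} (c : X' ⟶ X) (x y : (E.obj (op X)).obj A) :
    pullb E c (x - y) = pullb E c x - pullb E c y :=
  AddMonoidHom.map_sub _ x y

lemma pullb_zero {A X X' : C} (c : X' ⟶ X) :
    pullb E c (0 : (E.obj (op X)).obj A) = 0 :=
  AddMonoidHom.map_zero _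

lemma pushf_eqToHom_cancel {X A A' : C} (h : A = A') {x : (E.obj (op X)).obj A}
    (hx : pushf E (eqToHom h) x = 0) : x = 0 := by
  have h2 := congrArg (pushf E (eqToHom h.symm)) hx
  rwa [pushf_pushf, eqToHom_trans, eqToHom_refl, pushf_id, pushf_zero] at h2

variable {n : ℕ}

/-- The pullback of a distinguished extension along its own last differential vanishes. -/
lemma pullb_d_last {N : NExangulated C n} {Z : NExCplx C n} {ζ : NEext N.E Z}
    (hZ : N.Distinguished Z ζ) :
    pullb N.E (Z.d (Fin.last n)) ζ = 0 := by
  have h := N.exact_contra_last hZ (Z.X (Fin.castSucc (Fin.last n)))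
  exact (h (Z.d (Fin.last n))).mpr ⟨𝟙 _, Category.id_comp _⟩

lemma pullb_d_last_realize {N : NExangulated C n} {Xl X0 : C}
    {δ : (N.E.obj (op Xl)).obj X0} {Z : NExCplx C n}
    (h0 : Z.X (fin0 n) = X0) (hl : Z.X (finLast n) = Xl)
    (hZ : N.Distinguished Z (extCast N.E h0.symm hl.symm δ)) :
    pullb N.E (Z.d (Fin.last n) ≫ eqToHom hl) δ = 0 := by
  have h := pullb_d_last hZ
  rw [extCast, pullb_pullb, pullb_pushf] at h
  apply pushf_eqToHom_cancel h0.symm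
  convert h using 3

/-- Membership criterion for `EFR`: it suffices to find a morphism `t` with `F`-epi image
which kills the extension by pullback. -/
lemma mem_EFR_of_witness {A' : Type u₂} [Category.{v₂} A'] [Abelian A']
    {N : NExangulated C n} {F : C ⥤ A'} [F.Additive]
    {Xl X0 T : C} (t : T ⟶ Xl) (ht : Epi (F.map t))
    {ν : (N.E.obj (op Xl)).obj X0} (hv : pullb N.E t ν = 0) :
    ν ∈ EFR N F Xl X0 := by
  intro Z h0 hl hZ
  have hex := N.exact_contra_last hZ T
  have h1 : pullb N.E (t ≫ eqToHom hl.symm) (extCast N.E h0.symm hl.symm ν) = 0 := by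
    rw [extCast, pullb_pullb, pullb_pushf, Category.assoc, eqToHom_trans]
    have : pullb N.E (t ≫ eqToHom (hl.symm.trans hl.symm.symm)) ν = pullb N.E t ν := by
      congr 1
      simp
    rw [this, hv, pushf_zero]
  obtain ⟨h, hh⟩ := (hex (t ≫ eqToHom hl.symm)).mp h1
  refine Preadditive.epi_of_cancel_zero _ (fun u hu => ?_)
  have h2 : F.map (t ≫ eqToHom hl.symm) ≫ u = 0 := by
    rw [← hh, F.map_comp, Category.assoc, hu, comp_zero]
  rw [F.map_comp, Category.assoc] at h2
  have h3 : F.map (eqToHom hl.symm) ≫ u = 0 := zero_of_epi_comp (F.map t) h2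
  have h4 := zero_of_epi_comp (F.map (eqToHom hl.symm)) h3
  exact h4

/-- Any element of `EFR` admits a killing morphism with `F`-epi image. -/
lemma EFR_witness {A' : Type u₂} [Category.{v₂} A'] [Abelian A']
    {N : NExangulated C n} {F : C ⥤ A'} [F.Additive]
    {Xl X0 : C} {δ : (N.E.obj (op Xl)).obj X0} (hδ : δ ∈ EFR N F Xl X0) :
    ∃ (T : C) (t : T ⟶ Xl), Epi (F.map t) ∧ pullb N.E t δ = 0 := by
  obtain ⟨Z, h0, hl, hZ⟩ := N.realize X0 Xl δ
  refine ⟨Z.X (Fin.castSucc (Fin.last n)), Z.d (Fin.last n) ≫ eqToHom hl, ?_, ?_⟩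
  · rw [F.map_comp]
    have := hδ Z h0 hl hZ
    exact epi_comp _ _
  · exact pullb_d_last_realize h0 hl hZ

/-- Joint epimorphy of the images of the biproduct injections under an additive functor. -/
lemma F_biprod_cancel {A' : Type u₂} [Category.{v₂} A'] [Abelian A']
    {F : C ⥤ A'} [F.Additive] {P Q : C} {R : A'}
    (w : F.obj (P ⊞ Q) ⟶ R) (h1 : F.map biprod.inl ≫ w = 0)
    (h2 : F.map biprod.inr ≫ w = 0) : w = 0 := by
  have htot : (biprod.fst ≫ biprod.inl + biprod.snd ≫ biprod.inr : P ⊞ Q ⟶ P ⊞ Q) = 𝟙 _ :=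
    biprod.total
  calc w = F.map (𝟙 (P ⊞ Q)) ≫ w := by rw [F.map_id, Category.id_comp]
  _ = F.map (biprod.fst ≫ biprod.inl + biprod.snd ≫ biprod.inr) ≫ w := by rw [htot]
  _ = 0 := by
      rw [F.map_add, Preadditive.add_comp, F.map_comp, F.map_comp, Category.assoc,
        Category.assoc, h1, h2, comp_zero, comp_zero, add_zero]

end EFRSubgroupAux


section EFRSubgroupMain
set_option linter.unusedSectionVars false

variable {A' : Type u₂} [Category.{v₂} A'] [Abelian A']

lemma comp_zero_of_snd {X Y Z : A'} (f : X ⟶ Y) {g : Y ⟶ Z} (h : g = 0) :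
    f ≫ g = 0 := by rw [h, comp_zero]

lemma epi_F_desc_right {F : C ⥤ A'} [F.Additive] {P Q R : C} (p : P ⟶ R) (q : Q ⟶ R)
    (hq : Epi (F.map q)) : Epi (F.map (biprod.desc p q)) := by
  haveI := hq
  refine Preadditive.epi_of_cancel_zero _ (fun {R'} g hg => ?_)
  have h2 : F.map (biprod.inr ≫ biprod.desc p q) ≫ g = 0 := by
    rw [F.map_comp, Category.assoc, hg, comp_zero]
  rw [biprod.inr_desc] at h2
  exact zero_of_epi_comp _ h2

lemma epi_F_biprod_map {F : C ⥤ A'} [F.Additive] {P Q P' Q' : C} (t : P ⟶ P') (s : Q ⟶ Q')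
    (ht : Epi (F.map t)) (hs : Epi (F.map s)) : Epi (F.map (biprod.map t s)) := by
  haveI := ht; haveI := hs
  refine Preadditive.epi_of_cancel_zero _ (fun {R} g hg => ?_)
  refine F_biprod_cancel _ ?_ ?_
  · have h2 : F.map (biprod.inl ≫ biprod.map t s) ≫ g = 0 := by
      rw [F.map_comp, Category.assoc, hg, comp_zero]
    rw [biprod.inl_map, F.map_comp, Category.assoc] at h2
    exact zero_of_epi_comp _ h2
  · have h2 : F.map (biprod.inr ≫ biprod.map t s) ≫ g = 0 := by
      rw [F.map_comp, Category.assoc, hg, comp_zero]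
    rw [biprod.inr_map, F.map_comp, Category.assoc] at h2
    exact zero_of_epi_comp _ h2

/-- The central diagram chase: if the mapping cone of a ladder is distinguished and the
bottom row has `F`-epimorphic last differential, then so does the top row. -/
lemma cone_chase {m : ℕ} {N : NExangulated C (m + 1)} {F : C ⥤ A'} [F.Additive]
    (hF : IsHalfExact N F)
    (AA BB : Fin (m + 2) → C)
    (ff : ∀ i : Fin (m + 1), AA i.castSucc ⟶ AA i.succ)
    (gg : ∀ i : Fin (m + 1), BB i.castSucc ⟶ BB i.succ)
    (φf : ∀ i : Fin (m + 2), AA i ⟶ BB i)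
    (dl : (N.E.obj (op (BB ⟨m + 1, Nat.lt_succ_self _⟩))).obj (AA ⟨0, Nat.succ_pos _⟩))
    (hHC : IsHomotopyCartesian (m + 1) N.E N.Distinguished AA BB ff gg φf dl)
    (hepi : Epi (F.map (gg (Fin.last m)))) :
    Epi (F.map (ff (Fin.last m))) := by
  have hm : m < m + 1 := Nat.lt_succ_self m
  have distC : N.Distinguished (coneCplx (m + 1) AA BB ff gg φf)
      (extCast N.E (coneX_zero (m + 1) AA BB).symm (coneX_last (m + 1) AA BB).symm dl) := hHC
  obtain ⟨w, hex⟩ := hF distC ⟨m, hm⟩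
  have e1 : coneX (m + 1) AA BB (Fin.castSucc (Fin.succ (⟨m, hm⟩ : Fin (m + 1)))) =
      (AA ⟨m + 1, by omega⟩ ⊞ BB ⟨m, by omega⟩) :=
    coneX_mid (m + 1) AA BB _ (Nat.succ_ne_zero m) (Nat.le_refl (m + 1))
  have e2 : BB (Fin.succ (⟨m, by omega⟩ : Fin (m + 1))) = BB ⟨m + 1, by omega⟩ := rfl
  have e3 : BB ⟨m + 1, by omega⟩ =
      coneX (m + 1) AA BB (Fin.succ (Fin.succ (⟨m, hm⟩ : Fin (m + 1)))) :=
    (coneX_last (m + 1) AA BB).symm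
  have hdlast : (coneCplx (m + 1) AA BB ff gg φf).d (Fin.succ (⟨m, hm⟩ : Fin (m + 1))) =
      eqToHom e1 ≫ biprod.desc (φf ⟨m + 1, by omega⟩)
        (gg ⟨m, by omega⟩ ≫ eqToHom e2) ≫ eqToHom e3 := by
    rw [show (coneCplx (m + 1) AA BB ff gg φf).d (Fin.succ (⟨m, hm⟩ : Fin (m + 1))) =
        coneD (m + 1) AA BB ff gg φf (Fin.succ (⟨m, hm⟩ : Fin (m + 1))) from rfl,
      coneD, dif_neg (show ¬((Fin.succ (⟨m, hm⟩ : Fin (m + 1))).val = 0) from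
        Nat.succ_ne_zero m),
      dif_neg (show ¬((Fin.succ (⟨m, hm⟩ : Fin (m + 1))).val < m + 1) from
        Nat.lt_irrefl (m + 1))]
    rfl
  have epig : Epi (F.map ((coneCplx (m + 1) AA BB ff gg φf).d
      (Fin.succ (⟨m, hm⟩ : Fin (m + 1))))) := by
    rw [hdlast]
    dsimp only [coneCplx]
    rw [F.map_comp, F.map_comp]
    have hgg : Epi (F.map (gg ⟨m, by omega⟩ ≫ eqToHom e2)) := by
      rw [F.map_comp]
      haveI : Epi (F.map (gg (⟨m, by omega⟩ : Fin (m + 1)))) := hepi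
      exact epi_comp _ _
    haveI hdesc : Epi (F.map (biprod.desc (φf ⟨m + 1, by omega⟩)
        (gg ⟨m, by omega⟩ ≫ eqToHom e2))) := epi_F_desc_right _ _ hgg
    have h1 : Epi (F.map (eqToHom e1)) := inferInstance
    have h3 : Epi (F.map (eqToHom e3)) := inferInstance
    have hcomp1 : Epi (F.map (biprod.desc (φf ⟨m + 1, by omega⟩)
        (gg ⟨m, by omega⟩ ≫ eqToHom e2)) ≫ F.map (eqToHom e3)) :=
      @epi_comp _ _ _ _ _ _ hdesc _ h3
    exact @epi_comp _ _ _ _ _ _ h1 _ hcomp1 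
  refine Preadditive.epi_of_cancel_zero _ (fun {Q} u hu => ?_)
  set ubar : F.obj (coneX (m + 1) AA BB
      (Fin.castSucc (Fin.succ (⟨m, hm⟩ : Fin (m + 1))))) ⟶ Q :=
    F.map (eqToHom e1 ≫ biprod.fst) ≫ u with hubar
  have hu' : ∀ (pf : m < m + 1), F.map (ff ⟨m, pf⟩) ≫ u = 0 := fun pf => hu
  have stepA : F.map ((coneCplx (m + 1) AA BB ff gg φf).d
      (Fin.castSucc (⟨m, hm⟩ : Fin (m + 1)))) ≫ ubar = 0 := by
    rw [show (coneCplx (m + 1) AA BB ff gg φf).d (Fin.castSucc (⟨m, hm⟩ : Fin (m + 1))) =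
        coneD (m + 1) AA BB ff gg φf (Fin.castSucc (⟨m, hm⟩ : Fin (m + 1))) from rfl]
    change F.map (coneD (m + 1) AA BB ff gg φf (Fin.castSucc (⟨m, hm⟩ : Fin (m + 1)))) ≫ ubar =
      (0 : F.obj (coneX (m + 1) AA BB (Fin.castSucc (Fin.castSucc (⟨m, hm⟩ : Fin (m + 1))))) ⟶ Q)
    by_cases hm0 : m = 0
    · subst hm0
      rw [coneD, dif_pos (show ((Fin.castSucc (⟨0, hm⟩ : Fin 1)).val = 0) from rfl),
        dif_neg (show ¬(0 + 1 = 0) from Nat.succ_ne_zero 0), hubar, ← Functor.map_comp_assoc]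
      simp only [Category.assoc, eqToHom_trans_assoc, Nat.zero_add, Nat.add_sub_cancel,
        Fin.coe_castSucc, Fin.val_succ, eqToHom_refl, Category.id_comp, biprod.lift_fst]
      rw [Preadditive.comp_neg, Functor.map_neg, Preadditive.neg_comp, neg_eq_zero,
        Functor.map_comp, Category.assoc, hu', comp_zero]
    · rw [coneD, dif_neg (show ¬((Fin.castSucc (⟨m, hm⟩ : Fin (m + 1))).val = 0) from hm0),
        dif_pos (show ((Fin.castSucc (⟨m, hm⟩ : Fin (m + 1))).val < m + 1) from hm),
        hubar, ← Functor.map_comp_assoc]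
      simp only [Category.assoc, eqToHom_trans_assoc, Nat.add_sub_cancel,
        Fin.coe_castSucc, Fin.val_succ, eqToHom_refl, Category.id_comp, biprod.lift_fst]
      rw [Functor.map_comp, Category.assoc]
      apply comp_zero_of_snd
      refine F_biprod_cancel _ ?_ ?_
      · rw [← Functor.map_comp_assoc, biprod.inl_desc, Functor.map_neg,
          Preadditive.neg_comp, neg_eq_zero]
        exact hu
      · rw [← Functor.map_comp_assoc, biprod.inr_desc]
        simp
  haveI : Epi (F.map ((coneCplx (m + 1) AA BB ff gg φf).d
      (Fin.succ (⟨m, hm⟩ : Fin (m + 1))))) := epig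
  set vv := hex.desc ubar stepA with hvv
  have hgdesc : F.map ((coneCplx (m + 1) AA BB ff gg φf).d
      (Fin.succ (⟨m, hm⟩ : Fin (m + 1)))) ≫ vv = ubar :=
    hex.g_desc ubar stepA
  have hinr : F.map ((biprod.inr : BB ⟨m, by omega⟩ ⟶ _) ≫ eqToHom e1.symm) ≫ ubar = 0 := by
    rw [hubar, ← Functor.map_comp_assoc]
    simp [← Functor.map_comp]
  rw [← hgdesc] at hinr
  have key : F.map ((biprod.inr : BB ⟨m, by omega⟩ ⟶ _) ≫ eqToHom e1.symm) ≫
      F.map ((coneCplx (m + 1) AA BB ff gg φf).d (Fin.succ (⟨m, hm⟩ : Fin (m + 1)))) =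
      F.map (gg ⟨m, by omega⟩) ≫ F.map (eqToHom (e2.trans e3)) := by
    rw [hdlast]
    dsimp only [coneCplx]
    rw [← Functor.map_comp]
    simp
  replace hinr : F.map (gg ⟨m, hm⟩) ≫ F.map (eqToHom (e2.trans e3)) ≫ vv = 0 :=
    (Category.assoc _ _ _).symm.trans
      ((congrArg (· ≫ vv) key.symm).trans ((Category.assoc _ _ _).trans hinr))
  haveI : Epi (F.map (gg (⟨m, hm⟩ : Fin (m + 1)))) := hepi
  have hv1 := zero_of_epi_comp (F.map (gg (⟨m, hm⟩ : Fin (m + 1)))) hinr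
  have hv3 := zero_of_epi_comp (F.map (eqToHom (e2.trans e3))) hv1
  have hubar0 : ubar = 0 := by rw [← hgdesc, hv3]; exact comp_zero
  have hfin : u = F.map ((biprod.inl : AA ⟨m + 1, by omega⟩ ⟶ _) ≫ eqToHom e1.symm) ≫ ubar := by
    rw [hubar, ← Functor.map_comp_assoc]
    simp [← Functor.map_comp]
  rw [hfin, hubar0, comp_zero]

/-- `EFR` is closed under pullback. -/
lemma pullb_mem_EFR {n : ℕ} (hn : 0 < n) {N : NExangulated C n} {F : C ⥤ A'} [F.Additive]
    (hF : IsHalfExact N F) {Xl X0 : C}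
    {δ' : (N.E.obj (op Xl)).obj X0} (hδ' : δ' ∈ EFR N F Xl X0)
    {Y : C} (c₀ : Y ⟶ Xl) : pullb N.E c₀ δ' ∈ EFR N F Y X0 := by
  obtain ⟨m, rfl⟩ : ∃ m, n = m + 1 := ⟨n - 1, by omega⟩
  intro V hV0 hVl hV
  obtain ⟨Z, hZ0, hZl, hZ⟩ := N.realize X0 Xl δ'
  have epiZ : Epi (F.map (Z.d (Fin.last (m + 1)))) := hδ' Z hZ0 hZl hZ
  have h0 : V.X (fin0 (m + 1)) = Z.X (fin0 (m + 1)) := hV0.trans hZ0.symm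
  have hcompat : pushf N.E (eqToHom h0) (extCast N.E hV0.symm hVl.symm (pullb N.E c₀ δ'))
      = pullb N.E (eqToHom hVl ≫ c₀ ≫ eqToHom hZl.symm)
          (extCast N.E hZ0.symm hZl.symm δ') := by
    simp only [extCast, pullb_pushf, pushf_pushf, pullb_pullb, Category.assoc,
      eqToHom_trans, eqToHom_refl, Category.comp_id, Category.id_comp]
  obtain ⟨φ, hφ0, hφl, hHC⟩ := N.ea2 V Z _ _ hV hZ h0
    (eqToHom hVl ≫ c₀ ≫ eqToHom hZl.symm) hcompat
  exact cone_chase hF _ _ _ _ _ _ hHC epiZ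

/-- `EFR` contains `0`. -/
lemma EFR_zero_mem {n : ℕ} {N : NExangulated C n} {F : C ⥤ A'} [F.Additive] (Xl X0 : C) :
    (0 : (N.E.obj (op Xl)).obj X0) ∈ EFR N F Xl X0 :=
  mem_EFR_of_witness (𝟙 Xl) (by rw [F.map_id]; infer_instance) (pullb_zero _)

/-- `EFR` is closed under differences. -/
lemma EFR_sub_mem {n : ℕ} (hn : 0 < n) {N : NExangulated C n} {F : C ⥤ A'} [F.Additive]
    (hF : IsHalfExact N F) {Xl X0 : C} {x y : (N.E.obj (op Xl)).obj X0}
    (hx : x ∈ EFR N F Xl X0) (hy : y ∈ EFR N F Xl X0) : y - x ∈ EFR N F Xl X0 := by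
  obtain ⟨T, t, ht, htx⟩ := EFR_witness hx
  have hη : pullb N.E t y ∈ EFR N F T X0 := pullb_mem_EFR hn hF hy t
  obtain ⟨S, s, hs, hsy⟩ := EFR_witness hη
  haveI := ht; haveI := hs
  refine mem_EFR_of_witness (s ≫ t) ?_ ?_
  · rw [F.map_comp]; exact epi_comp _ _
  · rw [← pullb_pullb, pullb_sub, pullb_sub, hsy, htx, pullb_zero, sub_zero]

/-- `EFR` is closed under forming "direct sums" of extensions. -/
lemma EFR_biprod_mem {n : ℕ} {N : NExangulated C n} {F : C ⥤ A'} [F.Additive]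
    {Xl X0 : C} {δ δ' : (N.E.obj (op Xl)).obj X0}
    (hδ : δ ∈ EFR N F Xl X0) (hδ' : δ' ∈ EFR N F Xl X0) :
    pushf N.E (biprod.inl : X0 ⟶ X0 ⊞ X0) (pullb N.E (biprod.fst : Xl ⊞ Xl ⟶ Xl) δ) +
      pushf N.E (biprod.inr : X0 ⟶ X0 ⊞ X0) (pullb N.E (biprod.snd : Xl ⊞ Xl ⟶ Xl) δ')
      ∈ EFR N F (Xl ⊞ Xl) (X0 ⊞ X0) := by
  obtain ⟨T, t, ht, htx⟩ := EFR_witness hδ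
  obtain ⟨S, s, hs, hsy⟩ := EFR_witness hδ'
  haveI := ht; haveI := hs
  refine mem_EFR_of_witness (biprod.map t s) (epi_F_biprod_map t s ht hs) ?_
  · rw [pullb_add, pullb_pushf, pullb_pushf, pullb_pullb, pullb_pullb,
      biprod.map_fst, biprod.map_snd, ← pullb_pullb, ← pullb_pullb, htx, hsy,
      pullb_zero, pullb_zero, pushf_zero, pushf_zero, add_zero]

end EFRSubgroupMain


/-- `E^F_R(X_{n+1}, X₀)` is a subgroup of `E(X_{n+1}, X₀)`: it contains `0`, it
is stable under direct sums `δ ⊕ δ'` (formed via the biadditivity of `E`), and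
consequently under differences `δ' - δ`. -/
theorem EFR_subgroup {A' : Type u₂} [Category.{v₂} A'] [Abelian A']
    (n : ℕ) (hn : 0 < n) (N : NExangulated C n) (F : C ⥤ A') [F.Additive]
    (hF : IsHalfExact N F) (Xl X0 : C) (δ δ' : (N.E.obj (op Xl)).obj X0)
    (hδ : δ ∈ EFR N F Xl X0) (hδ' : δ' ∈ EFR N F Xl X0) :
    (pushf N.E (biprod.inl : X0 ⟶ X0 ⊞ X0) (pullb N.E (biprod.fst : Xl ⊞ Xl ⟶ Xl) δ) +
      pushf N.E (biprod.inr : X0 ⟶ X0 ⊞ X0) (pullb N.E (biprod.snd : Xl ⊞ Xl ⟶ Xl) δ')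
      ∈ EFR N F (Xl ⊞ Xl) (X0 ⊞ X0)) ∧
    δ' - δ ∈ EFR N F Xl X0 ∧
    (0 : (N.E.obj (op Xl)).obj X0) ∈ EFR N F Xl X0 ∧
    ∃ G : AddSubgroup ((N.E.obj (op Xl)).obj X0),
      (G : Set ((N.E.obj (op Xl)).obj X0)) = EFR N F Xl X0 := by
  have hzero : (0 : (N.E.obj (op Xl)).obj X0) ∈ EFR N F Xl X0 := EFR_zero_mem Xl X0
  have hsub : ∀ x y : (N.E.obj (op Xl)).obj X0, x ∈ EFR N F Xl X0 → y ∈ EFR N F Xl X0 →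
      y - x ∈ EFR N F Xl X0 := fun x y hx hy => EFR_sub_mem hn hF hx hy
  refine ⟨EFR_biprod_mem hδ hδ', hsub δ δ' hδ hδ', hzero,
    ⟨{ carrier := EFR N F Xl X0, zero_mem' := hzero,
       add_mem' := ?_, neg_mem' := ?_ }, rfl⟩⟩
  · intro a b ha hb
    have h1 := hsub a 0 ha hzero
    have h2 := hsub (0 - a) b h1 hb
    simpa [zero_sub, sub_neg_eq_add, add_comm] using h2
  · intro a ha
    simpa [zero_sub] using hsub a 0 ha hzero

end NEx
end

section
/- Let (C, E, s) be an n-exangulated category and H ⊆ C a full subcategory. Define E_H(X_{n+1}, X₀) = {δ ∈ E(X_{n+1}, X₀) : (δ_♯)_H = 0 for all H ∈ H}, i.e., all pullbacks of δ along morphisms from objects of H vanish. Then E_H coincides with E^{Y_H}_R, the maximal closed subfunctor making the restricted Yoneda functor Y_H : C → Mod H right exact. In particular, E_H is a closed subfunctor of E. -/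
open CategoryTheory CategoryTheory.Limits Opposite

universe v u v₂ u₂

namespace NEx

variable {C : Type u} [Category.{v} C]

variable [Preadditive C] [HasBinaryBiproducts C]

variable [HasZeroObject C]

omit [Preadditive C] [HasBinaryBiproducts C] [HasZeroObject C] in
lemma extCast_rfl_rfl (E : Cᵒᵖ ⥤ C ⥤ AddCommGrpCat.{v}) {A X : C}
    (δ : (E.obj (op X)).obj A) : extCast E rfl rfl δ = δ := by
  simp [extCast, pullb, pushf]

/-- **Example 4.7.** For a full subcategory `H ⊆ C`, the subfunctor
`E_H(X_{n+1}, X₀) = {δ | (δ_♯)_H = 0 for all H ∈ H}` coincides with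
`E^{Y_H}_R` for the restricted Yoneda functor `Y_H : C ⥤ Mod H`; in particular
`E_H` is a closed subfunctor of `E` (deflations relative to `E_H` are closed
under composition). -/
theorem EH_eq_EFR_restrictedYoneda (n : ℕ) (hn : 0 < n) (N : NExangulated C n)
    (P : C → Prop) :
    (∀ Xl X0 : C,
      {δ : (N.E.obj (op Xl)).obj X0 | ∀ H : C, P H → ∀ h : H ⟶ Xl, pullb N.E h δ = 0}
        = EFR N (preadditiveYoneda ⋙
            (Functor.whiskeringLeft (ObjectProperty.FullSubcategory P)ᵒᵖ Cᵒᵖ AddCommGrpCat.{v}).obj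
              (ObjectProperty.ι P).op) Xl X0) ∧
    (∀ {X Y Z' : C} (f : X ⟶ Y) (g : Y ⟶ Z'),
      IsRelDeflation n N.E N.Distinguished
        (fun Xl X0 => {δ | ∀ H : C, P H → ∀ h : H ⟶ Xl, pullb N.E h δ = 0}) f →
      IsRelDeflation n N.E N.Distinguished
        (fun Xl X0 => {δ | ∀ H : C, P H → ∀ h : H ⟶ Xl, pullb N.E h δ = 0}) g →
      IsRelDeflation n N.E N.Distinguished
        (fun Xl X0 => {δ | ∀ H : C, P H → ∀ h : H ⟶ Xl, pullb N.E h δ = 0}) (f ≫ g)) := by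
  set F := (preadditiveYoneda ⋙
      (Functor.whiskeringLeft (ObjectProperty.FullSubcategory P)ᵒᵖ Cᵒᵖ AddCommGrpCat.{v}).obj
        (ObjectProperty.ι P).op) with hF
  constructor
  · intro Xl X0
    ext δ
    constructor
    · -- E_H ⊆ EFR
      intro hδ Z h0 hl dist
      subst h0; subst hl
      rw [extCast_rfl_rfl] at dist
      rw [NatTrans.epi_iff_epi_app]
      intro k
      obtain ⟨⟨H, pH⟩⟩ := k
      rw [AddCommGrpCat.epi_iff_surjective]
      intro h
      have hex := N.exact_contra_last dist H
      have h0' : pullb N.E (h : H ⟶ Z.X (finLast n)) δ = 0 := hδ H pH h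
      obtain ⟨g, hg⟩ := (hex h).mp h0'
      exact ⟨g, hg⟩
    · -- EFR ⊆ E_H
      intro hδ H pH h
      obtain ⟨Z, h0, hl, dist⟩ := N.realize X0 Xl δ
      subst h0; subst hl
      have hepi : Epi (F.map (Z.d (Fin.last n))) := hδ Z rfl rfl dist
      rw [extCast_rfl_rfl] at dist
      rw [NatTrans.epi_iff_epi_app] at hepi
      have happ := hepi (op ⟨H, pH⟩)
      rw [AddCommGrpCat.epi_iff_surjective] at happ
      obtain ⟨g, hg⟩ := happ h
      have hex := N.exact_contra_last dist H
      exact (hex h).mpr ⟨g, hg⟩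
  · -- relative deflations compose
    intro X Y Z' f g hf hg
    obtain ⟨Zf, δf, distf, memf, h1f, h2f, hdf⟩ := hf
    obtain ⟨Zg, δg, distg, memg, h1g, h2g, hdg⟩ := hg
    have hcomp : IsDeflationFor n N.E N.Distinguished (f ≫ g) :=
      N.defl_comp f g ⟨Zf, δf, distf, h1f, h2f, hdf⟩ ⟨Zg, δg, distg, h1g, h2g, hdg⟩
    obtain ⟨Z, δ, dist, h1, h2, hd⟩ := hcomp
    refine ⟨Z, δ, dist, ?_, h1, h2, hd⟩
    intro H pH h'
    -- factor h' ≫ eqToHom h2 through g, then through f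
    have hexg := N.exact_contra_last distg H
    have hzg : pullb N.E (h' ≫ eqToHom h2 ≫ eqToHom h2g.symm) δg = 0 :=
      memg H pH _
    obtain ⟨k, hk⟩ := (hexg _).mp hzg
    -- h1' : H ⟶ Y with h1' ≫ g = h' ≫ eqToHom h2
    have hk' : (k ≫ eqToHom h1g) ≫ g = h' ≫ eqToHom h2 := by
      rw [hdg] at hk
      have := hk =≫ eqToHom h2g
      simp only [Category.assoc, eqToHom_trans, eqToHom_refl, Category.comp_id] at this ⊢
      simpa using this
    have hexf := N.exact_contra_last distf H
    have hzf : pullb N.E ((k ≫ eqToHom h1g) ≫ eqToHom h2f.symm) δf = 0 :=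
      memf H pH _
    obtain ⟨m, hm⟩ := (hexf _).mp hzf
    have hm' : (m ≫ eqToHom h1f) ≫ f = k ≫ eqToHom h1g := by
      rw [hdf] at hm
      have := hm =≫ eqToHom h2f
      simp only [Category.assoc, eqToHom_trans, eqToHom_refl, Category.comp_id] at this ⊢
      simpa using this
    have hex := N.exact_contra_last dist H
    refine (hex h').mpr ⟨(m ≫ eqToHom h1f) ≫ eqToHom h1.symm, ?_⟩
    rw [hd]
    dsimp only
    have : ((m ≫ eqToHom h1f) ≫ eqToHom h1.symm) ≫
        eqToHom h1 ≫ (f ≫ g) ≫ eqToHom h2.symm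
        = (((m ≫ eqToHom h1f) ≫ f) ≫ g) ≫ eqToHom h2.symm := by
      simp [Category.assoc]
    rw [this, hm', hk']
    simp

end NEx
end
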